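/- Let η_0 > 0, T ≥ 0, 0 ≤ t ≤ T, and let f : ℝ → ℂ be an integrable function with f(η) = 0 for all |η| > η_0. Then for every x ∈ ℝ and every p ≥ η_0²(T - t), e^{p} ∫_ℝ e^{-|p + η²(t-T)|} f(η) e^{-i x η} dη = ∫_ℝ e^{η²(T-t)} f(η) e^{-i x η} dη. -/
import Mathlib


open MeasureTheory Complex

/-- Exact recovery for band-limited data: if `f = û_T` vanishes for `|η| > η₀`, then
for every `p ≥ η₀²(T-t)` the Schrödingerised solution reproduces the exact solution:
`eᵖ ∫ e^{-|p+η²(t-T)|} f(η) e^{-ixη} dη = ∫ e^{η²(T-t)} f(η) e^{-ixη} dη`. -/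
theorem band_limited_exact_recovery
    (η0 T t : ℝ) (hη0 : 0 < η0) (hT : 0 ≤ T) (ht0 : 0 ≤ t) (htT : t ≤ T)
    (f : ℝ → ℂ) (hf : Integrable f)
    (hband : ∀ η : ℝ, η0 < |η| → f η = 0)
    (x p : ℝ) (hp : η0 ^ 2 * (T - t) ≤ p) :
    (Real.exp p : ℂ) *
        ∫ η : ℝ, (Real.exp (-|p + η ^ 2 * (t - T)|) : ℂ) * f η *
          Complex.exp (-Complex.I * x * η) =
      ∫ η : ℝ, (Real.exp (η ^ 2 * (T - t)) : ℂ) * f η *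
        Complex.exp (-Complex.I * x * η) := by
  rw [← integral_const_mul]
  congr 1
  funext η
  by_cases hfη : f η = 0
  · simp [hfη]
  · have hη : |η| ≤ η0 := by
      by_contra h
      exact hfη (hband η (lt_of_not_ge h))
    have hsq : η ^ 2 ≤ η0 ^ 2 := by
      have := _root_.sq_abs η
      nlinarith [abs_nonneg η]
    have hnn : 0 ≤ p + η ^ 2 * (t - T) := by nlinarith
    rw [_root_.abs_of_nonneg hnn]
    rw [show (Real.exp p : ℂ) * ((Real.exp (-(p + η ^ 2 * (t - T))) : ℂ) * f η *
        Complex.exp (-Complex.I * x * η)) = ((Real.exp p * Real.exp (-(p + η ^ 2 * (t - T))) : ℝ) : ℂ)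
        * f η * Complex.exp (-Complex.I * x * η) by push_cast; ring]
    rw [← Real.exp_add]
    ring_nf
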